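/- For every λ-term F there is a sequence (F_k)_{k∈ℕ} of terms such that: F_0 = F; F_k ▷* F_{k+1} for every k; for every G with F ▷* G there is some k with G ▷* F_k; and, with respect to a fixed effective Gödel numbering # of λ-terms, the function k ↦ #(F_k) is computable. -/

import Mathlib

/-! ## A de Bruijn presentation of the untyped λ-calculus -/

/-- Untyped λ-terms in de Bruijn representation. -/
inductive Lam : Type where
  | var : ℕ → Lam
  | app : Lam → Lam → Lam
  | abs : Lam → Lam
  deriving DecidableEq

namespace Lam

/-- Lifting of de Bruijn indices (cutoff `d`). -/
def lift (d : ℕ) : Lam → Lam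
  | var n => if n < d then var n else var (n + 1)
  | app a b => app (lift d a) (lift d b)
  | abs a => abs (lift (d + 1) a)

/-- Capture-avoiding substitution of `u` for the free variable `k`. -/
def subst : Lam → ℕ → Lam → Lam
  | var n, k, u => if n = k then u else if k < n then var (n - 1) else var n
  | app a b, k, u => app (subst a k u) (subst b k u)
  | abs a, k, u => abs (subst a (k + 1) (lift 0 u))

/-- One-step β-reduction `▷`. -/
inductive Step : Lam → Lam → Prop
  | beta (a b : Lam) : Step (app (abs a) b) (subst a 0 b)
  | appL {a a' : Lam} (b : Lam) : Step a a' → Step (app a b) (app a' b)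
  | appR (a : Lam) {b b' : Lam} : Step b b' → Step (app a b) (app a b')
  | abs {a a' : Lam} : Step a a' → Step (Lam.abs a) (Lam.abs a')

/-- β-reduction `▷*` : reflexive and transitive closure of `▷`. -/
def Steps : Lam → Lam → Prop := Relation.ReflTransGen Step

/-- β-normal term. -/
def Normal (t : Lam) : Prop := ∀ t', ¬ Step t t'

/-- `Free x t` : the variable `x` (de Bruijn index, seen from the root) occurs free in `t`. -/
def Free : ℕ → Lam → Prop
  | x, var n => x = n
  | x, app a b => Free x a ∨ Free x b
  | x, abs a => Free (x + 1) a

/-- Closed term. -/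
def Closed (t : Lam) : Prop := ∀ x, ¬ Free x t

/-- A variable applied to a (possibly empty) list of arguments. -/
inductive HeadVarApp : Lam → Prop
  | var (n : ℕ) : HeadVarApp (var n)
  | app {a : Lam} (b : Lam) : HeadVarApp a → HeadVarApp (app a b)

/-- Head normal forms `λx₁…λxₙ.(y t₁ … tₘ)`. -/
inductive IsHNF : Lam → Prop
  | head {t : Lam} : HeadVarApp t → IsHNF t
  | abs {a : Lam} : IsHNF a → IsHNF (Lam.abs a)

/-- A term is solvable if it β-reduces to a head normal form. -/
def Solvable (t : Lam) : Prop := ∃ h, Steps t h ∧ IsHNF h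

/-- `Ω = (λx.(x x))(λx.(x x))`. -/
def Omega : Lam := app (abs (app (var 0) (var 0))) (abs (app (var 0) (var 0)))

/-- Ω-reduction `▷_Ω` : replace an unsolvable subterm by `Ω`. -/
inductive OmegaStep : Lam → Lam → Prop
  | unsolv {t : Lam} : ¬ Solvable t → OmegaStep t Omega
  | appL {a a' : Lam} (b : Lam) : OmegaStep a a' → OmegaStep (app a b) (app a' b)
  | appR (a : Lam) {b b' : Lam} : OmegaStep b b' → OmegaStep (app a b) (app a b')
  | abs {a a' : Lam} : OmegaStep a a' → OmegaStep (Lam.abs a) (Lam.abs a')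

/-- `▷_Ω*`. -/
def OmegaSteps : Lam → Lam → Prop := Relation.ReflTransGen OmegaStep

/-- `▷_{βΩ}` : union of `▷` and `▷_Ω`. -/
def BOStep (t t' : Lam) : Prop := Step t t' ∨ OmegaStep t t'

/-- `▷_{βΩ}*`. -/
def BOSteps : Lam → Lam → Prop := Relation.ReflTransGen BOStep

/-- `u ≃ v` : equality in the λ-theory H (common `▷_{βΩ}*`-reduct). -/
def SimH (u v : Lam) : Prop := ∃ w, BOSteps u w ∧ BOSteps v w

/-- Simultaneous (parallel) substitution along `σ`. -/
def psubst (σ : ℕ → Lam) : Lam → Lam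
  | var n => σ n
  | app a b => app (psubst σ a) (psubst σ b)
  | abs a => abs (psubst (fun n => match n with | 0 => var 0 | m + 1 => lift 0 (σ m)) a)

/-- `(x V)` : the application of a head `h` to a list of arguments. -/
def mkApps (h : Lam) (as : List Lam) : Lam := as.foldl app h

/-- `U ⊑ V` : some initial segment of `V` is obtained from `U` by a substitution
followed by componentwise β-reductions. -/
def Sqsubseteq (U V : List Lam) : Prop :=
  ∃ (σ : ℕ → Lam) (W : List Lam), W <+: V ∧
    List.Forall₂ (fun u w => Steps (psubst σ u) w) U W

/-! ### Occurrences as positions -/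

/-- Directions inside a term. -/
inductive Dir : Type where
  | left | right | down
  deriving DecidableEq

/-- Positions (occurrences) in a term. -/
abbrev Pos := List Dir

/-- The subterm of `t` at position `p` (if any). -/
def subtermAt : Lam → Pos → Option Lam
  | t, [] => some t
  | app a _, Dir.left :: p => subtermAt a p
  | app _ b, Dir.right :: p => subtermAt b p
  | abs a, Dir.down :: p => subtermAt a p
  | _, _ :: _ => none

/-- Replace the subterm of `t` at position `p` by `s` (if the position exists). -/
def replaceAt : Lam → Pos → Lam → Option Lam
  | _, [], s => some s
  | app a b, Dir.left :: p, s => (replaceAt a p s).map (fun a' => app a' b)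
  | app a b, Dir.right :: p, s => (replaceAt b p s).map (fun b' => app a b')
  | abs a, Dir.down :: p, s => (replaceAt a p s).map Lam.abs
  | _, _ :: _, _ => none

/-- `OccOf x t p` : position `p` is an occurrence in `t` of the free variable `x`
(index seen from the root, hence shifted by the number of binders crossed). -/
def OccOf (x : ℕ) (t : Lam) (p : Pos) : Prop :=
  subtermAt t p = some (var (x + p.count Dir.down))

/-- `ArgOf t p V` : `V` is the maximal list of arguments, in `t`, of the occurrence
sitting at position `p`; i.e. `([] V)` is the applicative context of that occurrence. -/
def ArgOf (t : Lam) (p : Pos) (V : List Lam) : Prop :=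
  ∃ (q : Pos) (h : Lam),
    p = q ++ List.replicate V.length Dir.left ∧
    (∀ q' : Pos, q ≠ q' ++ [Dir.left]) ∧
    subtermAt t q = some (mkApps h V) ∧ subtermAt t p = some h

/-- `InArgOfOcc x t p q` : `q` is an occurrence of `x` in `t` and the position `p` lies
inside one of the elements of `Arg(x_[q], t)`. -/
def InArgOfOcc (x : ℕ) (t : Lam) (p q : Pos) : Prop :=
  OccOf x t q ∧ ∃ (r : Pos) (n : ℕ),
    q = r ++ List.replicate n Dir.left ∧
    (∀ r' : Pos, r ≠ r' ++ [Dir.left]) ∧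
    ∃ (j : ℕ) (s : Pos), j < n ∧ p = r ++ List.replicate j Dir.left ++ Dir.right :: s

/-- The occurrence `p` of `x` is pure in `t` : no other occurrence `q` of `x` in `t`
is such that `p` occurs in one of the elements of `Arg(x_[q], t)`. -/
def PureOcc (x : ℕ) (t : Lam) (p : Pos) : Prop :=
  OccOf x t p ∧ ∀ q, q ≠ p → ¬ InArgOfOcc x t p q

/-- Renaming of the free variable `y` into `x`. -/
def rename (y x : ℕ) : Lam → Lam
  | var n => if n = y then var x else var n
  | app a b => app (rename y x a) (rename y x b)
  | abs a => abs (rename (y + 1) (x + 1) a)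

/-- `Residue x u v p p'` : along some β-reduction from `u` to `v`, the occurrence `p'` of
`x` in `v` is a residue (traced copy) of the occurrence `p` of `x` in `u`.  This is
expressed by marking the occurrence `p` of `x` with a fresh variable `y` and tracing the
occurrences of `y`. -/
def Residue (x : ℕ) (u v : Lam) (p p' : Pos) : Prop :=
  ∃ (y : ℕ) (u₀ v₀ : Lam),
    ¬ Free y u ∧
    replaceAt u p (var (y + p.count Dir.down)) = some u₀ ∧
    Steps u₀ v₀ ∧ rename y x v₀ = v ∧ OccOf y v₀ p'

/-- The occurrence `p` of the free variable `0` ("x") in `G` is good with respect to the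
closed term `A` : it is pure in `G` and `u[x:=A]` is solvable for every subterm `u` of
`G` in which this occurrence occurs. -/
def GoodOcc (A G : Lam) (p : Pos) : Prop :=
  PureOcc 0 G p ∧
    ∀ (q : Pos) (u : Lam), q <+: p → subtermAt G q = some u →
      Solvable (subst u (q.count Dir.down) A)

/-! ### Miscellaneous -/

/-- A fixed effective Gödel numbering of λ-terms. -/
def code : Lam → ℕ
  | var n => Nat.pair 0 n
  | app a b => Nat.pair 1 (Nat.pair (code a) (code b))
  | abs a => Nat.pair 2 (code a)

/-- Body `f^k z` of the Church numeral. -/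
def churchBody : ℕ → Lam
  | 0 => var 0
  | k + 1 => app (var 1) (churchBody k)

/-- The Church numeral `c_k = λf λz.(f^k z)`. -/
def church (k : ℕ) : Lam := abs (abs (churchBody k))

/-- `n`-fold abstraction `λx₁…λxₙ.t`. -/
def absN : ℕ → Lam → Lam
  | 0, t => t
  | n + 1, t => abs (absN n t)

/-- Number of symbols of a term. -/
def size : Lam → ℕ
  | var _ => 1
  | app a b => size a + size b + 1
  | abs a => size a + 1

/-- Subterm relation. -/
inductive Subterm : Lam → Lam → Prop
  | refl (t : Lam) : Subterm t t
  | appL {s a : Lam} (b : Lam) : Subterm s a → Subterm s (app a b)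
  | appR (a : Lam) {s b : Lam} : Subterm s b → Subterm s (app a b)
  | abs {s a : Lam} : Subterm s a → Subterm s (Lam.abs a)

/-- `t` contains no subterm of the form `(x u)` for the free variable `x`. -/
def NoVarApp : ℕ → Lam → Prop
  | _, var _ => True
  | x, app a b => a ≠ var x ∧ NoVarApp x a ∧ NoVarApp x b
  | x, abs a => NoVarApp (x + 1) a

/-- Headed by the variable `d` : term of the form `(x V)` with `x = var d`. -/
inductive Headed : ℕ → Lam → Prop
  | var (d : ℕ) : Headed d (var d)
  | app {d : ℕ} {a : Lam} (b : Lam) : Headed d a → Headed d (app a b)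

end Lam


/-! ## Auxiliary development -/

namespace Lam

theorem lift_lift (t : Lam) : ∀ {i j}, i ≤ j → lift i (lift j t) = lift (j + 1) (lift i t) := by
  induction t with
  | var n =>
      intro i j h
      simp only [lift]
      split_ifs <;> simp only [lift] <;> split_ifs <;>
        first
          | rfl
          | omega
          | exact congrArg Lam.var (by omega)
  | app a b iha ihb => intro i j h; simp only [lift, iha h, ihb h]
  | abs a ih =>
      intro i j h
      simp only [lift]
      rw [ih (by omega)]

theorem lift_subst (t : Lam) :
    ∀ {i j} (s), j ≤ i → lift i (subst t j s) = subst (lift (i + 1) t) j (lift i s) := by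
  induction t with
  | var n =>
      intro i j s h
      simp only [subst, lift]
      split_ifs <;> simp only [subst, lift] <;> split_ifs <;>
        first
          | rfl
          | omega
          | exact congrArg Lam.var (by omega)
  | app a b iha ihb => intro i j s h; simp only [subst, lift, iha s h, ihb s h]
  | abs a ih =>
      intro i j s h
      simp only [subst, lift]
      rw [ih (lift 0 s) (by omega), ← lift_lift s (Nat.zero_le i)]

theorem lift_subst_lt (t : Lam) :
    ∀ {i j} (s), i ≤ j → lift i (subst t j s) = subst (lift i t) (j + 1) (lift i s) := by
  induction t with
  | var n =>
      intro i j s h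
      simp only [subst, lift]
      split_ifs <;> simp only [subst, lift] <;> split_ifs <;>
        first
          | rfl
          | omega
          | exact congrArg Lam.var (by omega)
  | app a b iha ihb => intro i j s h; simp only [subst, lift, iha s h, ihb s h]
  | abs a ih =>
      intro i j s h
      simp only [subst, lift]
      rw [ih (lift 0 s) (by omega), ← lift_lift s (Nat.zero_le i)]

theorem subst_lift (t : Lam) : ∀ k s, subst (lift k t) k s = t := by
  induction t with
  | var n =>
      intro k s
      simp only [lift]
      split_ifs <;> simp only [subst] <;> split_ifs <;>
        first
          | rfl
          | omega
          | exact congrArg Lam.var (by omega)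
  | app a b iha ihb => intro k s; simp only [subst, lift, iha, ihb]
  | abs a ih => intro k s; simp only [subst, lift, ih]

theorem subst_subst (t : Lam) :
    ∀ {i j} (u v), i ≤ j →
      subst (subst t i u) j v = subst (subst t (j + 1) (lift i v)) i (subst u j v) := by
  induction t with
  | var n =>
      intro i j u v h
      simp only [subst]
      split_ifs <;> (try simp only [subst]) <;> (try split_ifs) <;>
        first
          | rfl
          | omega
          | exact congrArg Lam.var (by omega)
          | exact (subst_lift v i (subst u j v)).symm
  | app a b iha ihb => intro i j u v h; simp only [subst, iha u v h, ihb u v h]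
  | abs a ih =>
      intro i j u v h
      simp only [subst]
      rw [ih (lift 0 u) (lift 0 v) (by omega), ← lift_lift v (Nat.zero_le i),
        ← lift_subst_lt u v (Nat.zero_le j)]

/-! ### Parallel reduction and complete developments -/

/-- Parallel (simultaneous) one-step β-reduction. -/
inductive Par : Lam → Lam → Prop
  | var (n : ℕ) : Par (var n) (var n)
  | app {a a' b b' : Lam} : Par a a' → Par b b' → Par (app a b) (app a' b')
  | abs {a a' : Lam} : Par a a' → Par (Lam.abs a) (Lam.abs a')
  | beta {a a' b b' : Lam} : Par a a' → Par b b' → Par (app (Lam.abs a) b) (subst a' 0 b')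

theorem Par.refl : ∀ t : Lam, Par t t := by
  intro t
  induction t with
  | var n => exact Par.var n
  | app a b iha ihb => exact Par.app iha ihb
  | abs a ih => exact Par.abs ih

theorem Par.of_step {t u : Lam} (h : Step t u) : Par t u := by
  induction h with
  | beta a b => exact Par.beta (Par.refl a) (Par.refl b)
  | appL b _ ih => exact Par.app ih (Par.refl b)
  | appR a _ ih => exact Par.app (Par.refl a) ih
  | abs _ ih => exact Par.abs ih

theorem Steps.appL {a a' : Lam} (b : Lam) (h : Steps a a') : Steps (app a b) (app a' b) :=
  Relation.ReflTransGen.lift (fun x => app x b) (fun _ _ h => Step.appL b h) _ _ h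

theorem Steps.appR (a : Lam) {b b' : Lam} (h : Steps b b') : Steps (app a b) (app a b') :=
  Relation.ReflTransGen.lift (fun x => app a x) (fun _ _ h => Step.appR a h) _ _ h

theorem Steps.absCongr {a a' : Lam} (h : Steps a a') : Steps (Lam.abs a) (Lam.abs a') :=
  Relation.ReflTransGen.lift Lam.abs (fun _ _ h => Step.abs h) _ _ h

theorem Par.to_steps {t u : Lam} (h : Par t u) : Steps t u := by
  induction h with
  | var n => exact Relation.ReflTransGen.refl
  | app _ _ iha ihb => exact Relation.ReflTransGen.trans (Steps.appL _ iha) (Steps.appR _ ihb)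
  | abs _ ih => exact Steps.absCongr ih
  | @beta a a' b b' _ _ iha ihb =>
      exact Relation.ReflTransGen.tail
        (Relation.ReflTransGen.trans (Steps.appL _ (Steps.absCongr iha)) (Steps.appR _ ihb))
        (Step.beta a' b')

theorem Par.lift {t u : Lam} (h : Par t u) : ∀ d, Par (lift d t) (lift d u) := by
  induction h with
  | var n => intro d; simp only [Lam.lift]; split_ifs <;> apply Par.refl
  | app _ _ iha ihb => intro d; exact Par.app (iha d) (ihb d)
  | abs _ ih => intro d; exact Par.abs (ih (d + 1))
  | @beta a a' b b' _ _ iha ihb =>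
      intro d
      have := Par.beta (iha (d + 1)) (ihb d)
      simpa [Lam.lift, lift_subst a' (b') (Nat.zero_le d)] using this

theorem Par.subst {t t' : Lam} (ht : Par t t') :
    ∀ {u u' : Lam} (k : ℕ), Par u u' → Par (subst t k u) (subst t' k u') := by
  induction ht with
  | var n =>
      intro u u' k hu
      simp only [Lam.subst]
      split_ifs <;> first | exact hu | apply Par.refl
  | app _ _ iha ihb => intro u u' k hu; exact Par.app (iha k hu) (ihb k hu)
  | abs _ ih => intro u u' k hu; exact Par.abs (ih (k + 1) (hu.lift 0))
  | @beta a a' b b' _ _ iha ihb =>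
      intro u u' k hu
      have h1 : Par (Lam.lift 0 u) (Lam.lift 0 u') := hu.lift 0
      have h2 := iha (k + 1) h1
      have h3 := ihb k hu
      have h4 := Par.beta h2 h3
      have h5 : Lam.subst (Lam.subst a' (k + 1) (Lam.lift 0 u')) 0 (Lam.subst b' k u')
          = Lam.subst (Lam.subst a' 0 b') k u' :=
        (subst_subst a' b' u' (Nat.zero_le k)).symm
      simpa [Lam.subst, h5] using h4

/-- The complete development (Gross–Knuth full step). -/
def cd : Lam → Lam
  | var n => var n
  | app (Lam.abs a) b => subst (cd a) 0 (cd b)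
  | app (var n) b => app (var n) (cd b)
  | app (app a₁ a₂) b => app (cd (app a₁ a₂)) (cd b)
  | abs a => abs (cd a)

theorem Par.abs_inv {a u : Lam} (h : Par (Lam.abs a) u) : ∃ a', u = Lam.abs a' ∧ Par a a' := by
  cases h with
  | abs h => exact ⟨_, rfl, h⟩

/-- The triangle property. -/
theorem Par.triangle : ∀ {t u : Lam}, Par t u → Par u (cd t) := by
  intro t
  induction t using cd.induct with
  | case1 n => intro u h; cases h; exact Par.var n
  | case2 a b iha ihb =>
      intro u h
      cases h with
      | app ha hb =>
          obtain ⟨a', rfl, ha'⟩ := Par.abs_inv ha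
          exact Par.beta (iha ha') (ihb hb)
      | beta ha hb => exact Par.subst (iha ha) 0 (ihb hb)
  | case3 n b ihb =>
      intro u h
      cases h with
      | app ha hb => cases ha; exact Par.app (Par.refl _) (ihb hb)
  | case4 a₁ a₂ b iha ihb =>
      intro u h
      cases h with
      | app ha hb => exact Par.app (iha ha) (ihb hb)
  | case5 a ih =>
      intro u h
      obtain ⟨a', rfl, ha'⟩ := Par.abs_inv h
      exact Par.abs (ih ha')

theorem Par.cd_mono {t u : Lam} (h : Par t u) : Par (cd t) (cd u) :=
  Par.triangle (Par.triangle h)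

theorem Par.steps_cd (t : Lam) : Steps t (cd t) := (Par.triangle (Par.refl t)).to_steps

theorem parStar_to_steps {t u : Lam} (h : Relation.ReflTransGen Par t u) : Steps t u := by
  induction h with
  | refl => exact Relation.ReflTransGen.refl
  | tail _ hp ih => exact Relation.ReflTransGen.trans ih hp.to_steps

theorem steps_to_parStar {t u : Lam} (h : Steps t u) : Relation.ReflTransGen Par t u :=
  Relation.ReflTransGen.mono (fun _ _ hs => Par.of_step hs) _ _ h

theorem parStar_cd_mono {t u : Lam} (h : Relation.ReflTransGen Par t u) :
    Relation.ReflTransGen Par (cd t) (cd u) := by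
  induction h with
  | refl => exact Relation.ReflTransGen.refl
  | tail _ hp ih => exact Relation.ReflTransGen.tail ih hp.cd_mono

theorem cofinal_cd_par {F G : Lam} (h : Relation.ReflTransGen Par F G) :
    ∃ k, Relation.ReflTransGen Par G (cd^[k] F) := by
  induction h with
  | refl => exact ⟨0, Relation.ReflTransGen.refl⟩
  | @tail G' G _ hp ih =>
      obtain ⟨k, hk⟩ := ih
      refine ⟨k + 1, ?_⟩
      have h1 : Relation.ReflTransGen Par G (cd G') := Relation.ReflTransGen.single hp.triangle
      have h2 : Relation.ReflTransGen Par (cd G') (cd (cd^[k] F)) :=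
        parStar_cd_mono hk
      have h3 : cd (cd^[k] F) = cd^[k + 1] F := (Function.iterate_succ_apply' cd k F).symm
      exact h3 ▸ Relation.ReflTransGen.trans h1 h2

theorem cofinal_cd {F G : Lam} (h : Steps F G) : ∃ k, Steps G (cd^[k] F) := by
  obtain ⟨k, hk⟩ := cofinal_cd_par (steps_to_parStar h)
  exact ⟨k, parStar_to_steps hk⟩

end Lam

namespace Lam

/-! ### Basic facts about the Gödel numbering -/

theorem lt_pair1 (m : ℕ) : m < Nat.pair 1 m := by
  simp only [Nat.pair]
  split_ifs with h
  · have : m ≤ m * m := Nat.le_mul_of_pos_left m (by omega)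
    omega
  · omega

theorem lt_pair2 (m : ℕ) : m < Nat.pair 2 m := by
  simp only [Nat.pair]
  split_ifs with h
  · have : m ≤ m * m := Nat.le_mul_of_pos_left m (by omega)
    omega
  · omega

theorem pair_le_pair {a b c d : ℕ} (h1 : a ≤ c) (h2 : b ≤ d) :
    Nat.pair a b ≤ Nat.pair c d := by
  have s1 : Nat.pair a b ≤ Nat.pair c b := by
    rcases h1.lt_or_eq with h | h
    · exact (Nat.pair_lt_pair_left b h).le
    · rw [h]
  have s2 : Nat.pair c b ≤ Nat.pair c d := by
    rcases h2.lt_or_eq with h | h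
    · exact (Nat.pair_lt_pair_right c h).le
    · rw [h]
  exact le_trans s1 s2

theorem code_app_left (a b : Lam) : code a < code (app a b) :=
  lt_of_le_of_lt (Nat.left_le_pair (code a) (code b)) (lt_pair1 _)

theorem code_app_right (a b : Lam) : code b < code (app a b) :=
  lt_of_le_of_lt (Nat.right_le_pair (code a) (code b)) (lt_pair1 _)

theorem code_abs (a : Lam) : code a < code (abs a) := lt_pair2 _

theorem var_le_code (n : ℕ) : n ≤ code (var n) := Nat.right_le_pair 0 n

theorem lift_eq_of_code_lt : ∀ (t : Lam) (d : ℕ), code t < d → lift d t = t := by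
  intro t
  induction t with
  | var n =>
      intro d h
      have := var_le_code n
      simp only [lift, if_pos (by omega : n < d)]
  | app a b iha ihb =>
      intro d h
      have ha := code_app_left a b
      have hb := code_app_right a b
      simp only [lift, iha d (by omega), ihb d (by omega)]
  | abs a ih =>
      intro d h
      have ha := code_abs a
      simp only [lift, ih (d + 1) (by omega)]

theorem subst_eq_of_code_lt : ∀ (t : Lam) (k : ℕ) (u : Lam), code t < k → subst t k u = t := by
  intro t
  induction t with
  | var n =>
      intro k u h
      have := var_le_code n
      simp only [subst, if_neg (by omega : ¬ n = k), if_neg (by omega : ¬ k < n)]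
  | app a b iha ihb =>
      intro k u h
      have ha := code_app_left a b
      have hb := code_app_right a b
      simp only [subst, iha k u (by omega), ihb k u (by omega)]
  | abs a ih =>
      intro k u h
      have ha := code_abs a
      simp only [subst, ih (k + 1) (lift 0 u) (by omega)]

/-! ### Decoding -/

def ldecode (n : ℕ) : Lam :=
  match h : n.unpair with
  | (0, m) => var m
  | (1, m) =>
      have hpn : Nat.pair 1 m = n := by
        have := Nat.pair_unpair n
        rw [h] at this
        exact this
      have h1 : m.unpair.1 < n := lt_of_le_of_lt (Nat.unpair_left_le m) (hpn ▸ lt_pair1 m)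
      have h2 : m.unpair.2 < n := lt_of_le_of_lt (Nat.unpair_right_le m) (hpn ▸ lt_pair1 m)
      app (ldecode m.unpair.1) (ldecode m.unpair.2)
  | (2, m) =>
      have hpn : Nat.pair 2 m = n := by
        have := Nat.pair_unpair n
        rw [h] at this
        exact this
      have h2 : m < n := hpn ▸ lt_pair2 m
      abs (ldecode m)
  | (_ + 3, _) => var 0
termination_by n

theorem ldecode_pair0 (m : ℕ) : ldecode (Nat.pair 0 m) = var m := by
  rw [ldecode]
  split <;> rename_i heq <;> rw [Nat.unpair_pair] at heq <;>
    simp only [Prod.mk.injEq] at heq <;> obtain ⟨h1, h2⟩ := heq <;>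
    first | (subst h2; rfl) | exact absurd h1 (by omega)

theorem ldecode_pair1 (m : ℕ) :
    ldecode (Nat.pair 1 m) = app (ldecode m.unpair.1) (ldecode m.unpair.2) := by
  rw [ldecode]
  split <;> rename_i heq <;> rw [Nat.unpair_pair] at heq <;>
    simp only [Prod.mk.injEq] at heq <;> obtain ⟨h1, h2⟩ := heq <;>
    first | (subst h2; rfl) | exact absurd h1 (by omega)

theorem ldecode_pair2 (m : ℕ) : ldecode (Nat.pair 2 m) = abs (ldecode m) := by
  rw [ldecode]
  split <;> rename_i heq <;> rw [Nat.unpair_pair] at heq <;>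
    simp only [Prod.mk.injEq] at heq <;> obtain ⟨h1, h2⟩ := heq <;>
    first | (subst h2; rfl) | exact absurd h1 (by omega)

theorem ldecode_pair3 (k m : ℕ) : ldecode (Nat.pair (k + 3) m) = var 0 := by
  rw [ldecode]
  split <;> rename_i heq <;> rw [Nat.unpair_pair] at heq <;>
    simp only [Prod.mk.injEq] at heq <;> obtain ⟨h1, h2⟩ := heq <;>
    first | rfl | (subst h2; rfl) | exact absurd h1 (by omega)

theorem ldecode_code : ∀ t : Lam, ldecode (code t) = t := by
  intro t
  induction t with
  | var n => simp [code, ldecode_pair0]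
  | app a b iha ihb => simp [code, ldecode_pair1, Nat.unpair_pair, iha, ihb]
  | abs a ih => simp [code, ldecode_pair2, ih]

theorem code_ldecode_le (n : ℕ) : code (ldecode n) ≤ n := by
  induction n using Nat.strong_induction_on with
  | _ n ih =>
      rcases h : n.unpair with ⟨t, m⟩
      have hpn : Nat.pair t m = n := by
        have := Nat.pair_unpair n
        rw [h] at this
        exact this
      match t with
      | 0 =>
          rw [← hpn, ldecode_pair0]
          simp [code]
      | 1 =>
          have hm : m < n := hpn ▸ lt_pair1 m
          have h1 : m.unpair.1 < n := lt_of_le_of_lt (Nat.unpair_left_le m) hm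
          have h2 : m.unpair.2 < n := lt_of_le_of_lt (Nat.unpair_right_le m) hm
          rw [← hpn, ldecode_pair1]
          simp only [code]
          exact le_trans (pair_le_pair (le_refl 1) (pair_le_pair (ih _ h1) (ih _ h2)))
            (pair_le_pair (le_refl 1) (le_of_eq (Nat.pair_unpair m)))
      | 2 =>
          have hm : m < n := hpn ▸ lt_pair2 m
          rw [← hpn, ldecode_pair2]
          simp only [code]
          exact pair_le_pair (le_refl 2) (ih m hm)
      | k + 3 =>
          rw [← hpn, ldecode_pair3]
          simp [code, Nat.pair]

/-! ### Tables for `lift` -/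

def tabGet (l : List ℕ) (x d : ℕ) : ℕ := l.getD (min d (x + 1)) 0

def liftTab (n : ℕ) : List ℕ :=
  (List.range (n + 2)).map fun d => code (lift d (ldecode n))

theorem range_map_getD {α : Type*} (z : α) {f : ℕ → α} {k i : ℕ} (h : i < k) :
    ((List.range k).map f).getD i z = f i := by
  rw [List.getD_eq_getElem?_getD, List.getElem?_map, List.getElem?_range h]
  rfl

theorem tabGet_liftTab (x d : ℕ) : tabGet (liftTab x) x d = code (lift d (ldecode x)) := by
  unfold tabGet liftTab
  rcases le_or_gt d (x + 1) with h | h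
  · rw [min_eq_left h, range_map_getD 0 (by omega)]
  · rw [min_eq_right (by omega), range_map_getD 0 (by omega)]
    rw [lift_eq_of_code_lt _ _ (by have := code_ldecode_le x; omega),
      lift_eq_of_code_lt _ _ (by have := code_ldecode_le x; omega)]

def liftEntry (L : List (List ℕ)) (n d : ℕ) : ℕ :=
  if n.unpair.1 = 0 then
    (if n.unpair.2 < d then Nat.pair 0 n.unpair.2 else Nat.pair 0 (n.unpair.2 + 1))
  else if n.unpair.1 = 1 then
    Nat.pair 1 (Nat.pair
      (tabGet (L.getD n.unpair.2.unpair.1 []) n.unpair.2.unpair.1 d)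
      (tabGet (L.getD n.unpair.2.unpair.2 []) n.unpair.2.unpair.2 d))
  else if n.unpair.1 = 2 then
    Nat.pair 2 (tabGet (L.getD n.unpair.2 []) n.unpair.2 (d + 1))
  else
    (if 0 < d then Nat.pair 0 0 else Nat.pair 0 1)

def liftG (L : List (List ℕ)) : List ℕ :=
  (List.range (L.length + 2)).map (liftEntry L L.length)

theorem liftG_spec (n : ℕ) : liftG ((List.range n).map liftTab) = liftTab n := by
  have hlen : ((List.range n).map liftTab).length = n := by simp
  rw [liftG, hlen]
  conv_rhs => rw [liftTab]
  apply List.map_congr_left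
  intro d _
  rcases h : n.unpair with ⟨t, m⟩
  have hpn : Nat.pair t m = n := by
    have := Nat.pair_unpair n
    rw [h] at this
    exact this
  have hu1 : n.unpair.1 = t := by rw [h]
  have hu2 : n.unpair.2 = m := by rw [h]
  match t with
  | 0 =>
      have hdec : ldecode n = var m := by rw [← hpn]; exact ldecode_pair0 m
      rw [hdec]
      simp only [liftEntry, hu1, hu2]
      norm_num
      simp only [lift]
      split_ifs <;> simp [code]
  | 1 =>
      have hm : m < n := hpn ▸ lt_pair1 m
      have h1 : m.unpair.1 < n := lt_of_le_of_lt (Nat.unpair_left_le m) hm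
      have h2 : m.unpair.2 < n := lt_of_le_of_lt (Nat.unpair_right_le m) hm
      have hdec : ldecode n = app (ldecode m.unpair.1) (ldecode m.unpair.2) := by
        rw [← hpn]; exact ldecode_pair1 m
      rw [hdec]
      simp only [liftEntry, hu1, hu2]
      rw [range_map_getD ([] : List ℕ) h1, range_map_getD ([] : List ℕ) h2,
        tabGet_liftTab, tabGet_liftTab]
      norm_num [lift, code]
  | 2 =>
      have hm : m < n := hpn ▸ lt_pair2 m
      have hdec : ldecode n = abs (ldecode m) := by rw [← hpn]; exact ldecode_pair2 m
      rw [hdec]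
      simp only [liftEntry, hu1, hu2]
      rw [range_map_getD ([] : List ℕ) hm, tabGet_liftTab]
      norm_num [lift, code]
  | k + 3 =>
      have hdec : ldecode n = var 0 := by rw [← hpn]; exact ldecode_pair3 k m
      rw [hdec]
      simp only [liftEntry, hu1, hu2]
      rw [if_neg (by omega : ¬ (k + 3 = 0)), if_neg (by omega : ¬ (k + 3 = 1)),
        if_neg (by omega : ¬ (k + 3 = 2))]
      simp only [lift]
      split_ifs <;> simp [code]

theorem primrec_tabGet : Primrec fun p : (List ℕ × ℕ) × ℕ => tabGet p.1.1 p.1.2 p.2 :=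
  (Primrec.list_getD 0).comp (Primrec.fst.comp Primrec.fst)
    (Primrec.nat_min.comp Primrec.snd (Primrec.succ.comp (Primrec.snd.comp Primrec.fst)))

theorem primrec_liftEntry :
    Primrec fun p : (List (List ℕ) × ℕ) × ℕ => liftEntry p.1.1 p.1.2 p.2 := by
  have hL : Primrec fun p : (List (List ℕ) × ℕ) × ℕ => p.1.1 := Primrec.fst.comp Primrec.fst
  have hn : Primrec fun p : (List (List ℕ) × ℕ) × ℕ => p.1.2 := Primrec.snd.comp Primrec.fst
  have hd : Primrec fun p : (List (List ℕ) × ℕ) × ℕ => p.2 := Primrec.snd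
  have hu1 : Primrec fun p : (List (List ℕ) × ℕ) × ℕ => p.1.2.unpair.1 :=
    Primrec.fst.comp (Primrec.unpair.comp hn)
  have hu2 : Primrec fun p : (List (List ℕ) × ℕ) × ℕ => p.1.2.unpair.2 :=
    Primrec.snd.comp (Primrec.unpair.comp hn)
  have hx : Primrec fun p : (List (List ℕ) × ℕ) × ℕ => p.1.2.unpair.2.unpair.1 :=
    Primrec.fst.comp (Primrec.unpair.comp hu2)
  have hy : Primrec fun p : (List (List ℕ) × ℕ) × ℕ => p.1.2.unpair.2.unpair.2 :=
    Primrec.snd.comp (Primrec.unpair.comp hu2)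
  have hget : ∀ (idx : (List (List ℕ) × ℕ) × ℕ → ℕ), Primrec idx →
      Primrec fun p : (List (List ℕ) × ℕ) × ℕ => (p.1.1).getD (idx p) ([] : List ℕ) :=
    fun idx hidx =>
    (Primrec.list_getD ([] : List ℕ)).comp hL hidx
  unfold liftEntry
  apply Primrec.ite (PrimrecRel.comp Primrec.eq hu1 (Primrec.const 0))
  · apply Primrec.ite (PrimrecRel.comp Primrec.nat_lt hu2 hd)
    · exact Primrec₂.natPair.comp (Primrec.const 0) hu2
    · exact Primrec₂.natPair.comp (Primrec.const 0) (Primrec.succ.comp hu2)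
  apply Primrec.ite (PrimrecRel.comp Primrec.eq hu1 (Primrec.const 1))
  · exact Primrec₂.natPair.comp (Primrec.const 1)
      (Primrec₂.natPair.comp
        (primrec_tabGet.comp ((Primrec.pair (hget _ hx) hx).pair hd))
        (primrec_tabGet.comp ((Primrec.pair (hget _ hy) hy).pair hd)))
  apply Primrec.ite (PrimrecRel.comp Primrec.eq hu1 (Primrec.const 2))
  · exact Primrec₂.natPair.comp (Primrec.const 2)
      (primrec_tabGet.comp ((Primrec.pair (hget _ hu2) hu2).pair (Primrec.succ.comp hd)))
  apply Primrec.ite (PrimrecRel.comp Primrec.nat_lt (Primrec.const 0) hd)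
  · exact Primrec.const (Nat.pair 0 0)
  · exact Primrec.const (Nat.pair 0 1)

theorem primrec_liftG : Primrec liftG := by
  have hlen : Primrec fun L : List (List ℕ) => L.length := Primrec.list_length
  apply Primrec.list_map (Primrec.list_range.comp (Primrec.succ.comp (Primrec.succ.comp hlen)))
  exact (primrec_liftEntry.comp
    (((Primrec.fst).pair (hlen.comp Primrec.fst)).pair Primrec.snd)).to₂

theorem primrec_liftTab : Primrec liftTab := by
  have key : Primrec₂ fun (_ : Unit) (n : ℕ) => liftTab n := by
    apply Primrec.nat_strong_rec _ (g := fun (_ : Unit) (L : List (List ℕ)) =>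
      some (liftG L)) ((Primrec.option_some.comp (primrec_liftG.comp Primrec.snd)).to₂)
    intro _ n
    rw [liftG_spec]
  exact key.comp (Primrec.const ()) Primrec.id

def nlift (d n : ℕ) : ℕ := tabGet (liftTab n) n d

theorem nlift_spec (d n : ℕ) : nlift d n = code (lift d (ldecode n)) := tabGet_liftTab n d

theorem primrec_nlift : Primrec₂ nlift :=
  primrec_tabGet.comp (((primrec_liftTab.comp Primrec.snd).pair Primrec.snd).pair Primrec.fst)

def nnorm (n : ℕ) : ℕ := nlift (n + 1) n

theorem nnorm_spec (n : ℕ) : nnorm n = code (ldecode n) := by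
  rw [nnorm, nlift_spec, lift_eq_of_code_lt _ _ (by have := code_ldecode_le n; omega)]

theorem primrec_nnorm : Primrec nnorm :=
  primrec_nlift.comp Primrec.succ Primrec.id

def nliftIter (j c : ℕ) : ℕ := (nlift 0)^[j] c

theorem nliftIter_spec (j : ℕ) (w : Lam) :
    nliftIter j (code w) = code ((lift 0)^[j] w) := by
  induction j with
  | zero => rfl
  | succ j ih =>
      rw [nliftIter, Function.iterate_succ_apply', Function.iterate_succ_apply',
        ← nliftIter, ih, nlift_spec, ldecode_code]

theorem primrec_nliftIter : Primrec₂ nliftIter :=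
  Primrec.nat_iterate Primrec.fst Primrec.snd
    ((primrec_nlift.comp (Primrec.const 0) Primrec.id).comp Primrec.snd).to₂

end Lam

namespace Lam

/-! ### Tables for `subst` -/

def substTab (cu ct : ℕ) : List ℕ :=
  (List.range (ct + 2)).map fun j => code (subst (ldecode ct) j ((lift 0)^[j] (ldecode cu)))

theorem tabGet_substTab (cu x j : ℕ) :
    tabGet (substTab cu x) x j = code (subst (ldecode x) j ((lift 0)^[j] (ldecode cu))) := by
  unfold tabGet substTab
  rcases le_or_gt j (x + 1) with h | h
  · rw [min_eq_left h, range_map_getD 0 (by omega)]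
  · rw [min_eq_right (by omega), range_map_getD 0 (by omega)]
    rw [subst_eq_of_code_lt _ _ _ (by have := code_ldecode_le x; omega),
      subst_eq_of_code_lt _ _ _ (by have := code_ldecode_le x; omega)]

def substEntry (cu : ℕ) (L : List (List ℕ)) (n j : ℕ) : ℕ :=
  if n.unpair.1 = 0 then
    (if n.unpair.2 = j then nliftIter j (nnorm cu)
     else if j < n.unpair.2 then Nat.pair 0 (n.unpair.2 - 1) else Nat.pair 0 n.unpair.2)
  else if n.unpair.1 = 1 then
    Nat.pair 1 (Nat.pair
      (tabGet (L.getD n.unpair.2.unpair.1 []) n.unpair.2.unpair.1 j)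
      (tabGet (L.getD n.unpair.2.unpair.2 []) n.unpair.2.unpair.2 j))
  else if n.unpair.1 = 2 then
    Nat.pair 2 (tabGet (L.getD n.unpair.2 []) n.unpair.2 (j + 1))
  else
    (if 0 = j then nliftIter j (nnorm cu) else Nat.pair 0 0)

def substG (cu : ℕ) (L : List (List ℕ)) : List ℕ :=
  (List.range (L.length + 2)).map (substEntry cu L L.length)

theorem nliftIter_nnorm (cu j : ℕ) :
    nliftIter j (nnorm cu) = code ((lift 0)^[j] (ldecode cu)) := by
  rw [nnorm_spec, nliftIter_spec]

theorem substG_spec (cu n : ℕ) :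
    substG cu ((List.range n).map (substTab cu)) = substTab cu n := by
  have hlen : ((List.range n).map (substTab cu)).length = n := by simp
  rw [substG, hlen]
  conv_rhs => rw [substTab]
  apply List.map_congr_left
  intro j _
  rcases h : n.unpair with ⟨t, m⟩
  have hpn : Nat.pair t m = n := by
    have := Nat.pair_unpair n
    rw [h] at this
    exact this
  have hu1 : n.unpair.1 = t := by rw [h]
  have hu2 : n.unpair.2 = m := by rw [h]
  match t with
  | 0 =>
      have hdec : ldecode n = var m := by rw [← hpn]; exact ldecode_pair0 m
      rw [hdec]
      simp only [substEntry, hu1, hu2, nliftIter_nnorm]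
      norm_num
      simp only [subst]
      split_ifs <;> simp [code]
  | 1 =>
      have hm : m < n := hpn ▸ lt_pair1 m
      have h1 : m.unpair.1 < n := lt_of_le_of_lt (Nat.unpair_left_le m) hm
      have h2 : m.unpair.2 < n := lt_of_le_of_lt (Nat.unpair_right_le m) hm
      have hdec : ldecode n = app (ldecode m.unpair.1) (ldecode m.unpair.2) := by
        rw [← hpn]; exact ldecode_pair1 m
      rw [hdec]
      simp only [substEntry, hu1, hu2]
      rw [range_map_getD ([] : List ℕ) h1, range_map_getD ([] : List ℕ) h2,
        tabGet_substTab, tabGet_substTab]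
      norm_num [subst, code]
  | 2 =>
      have hm : m < n := hpn ▸ lt_pair2 m
      have hdec : ldecode n = abs (ldecode m) := by rw [← hpn]; exact ldecode_pair2 m
      rw [hdec]
      simp only [substEntry, hu1, hu2]
      rw [range_map_getD ([] : List ℕ) hm, tabGet_substTab]
      simp only [subst]
      rw [← Function.iterate_succ_apply' (lift 0) j]
      norm_num [code]
  | k + 3 =>
      have hdec : ldecode n = var 0 := by rw [← hpn]; exact ldecode_pair3 k m
      rw [hdec]
      simp only [substEntry, hu1, hu2, nliftIter_nnorm]
      rw [if_neg (by omega : ¬ (k + 3 = 0)), if_neg (by omega : ¬ (k + 3 = 1)),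
        if_neg (by omega : ¬ (k + 3 = 2))]
      simp only [subst]
      split_ifs <;> first | rfl | omega | simp [code]

theorem primrec_substEntry :
    Primrec fun p : ((ℕ × List (List ℕ)) × ℕ) × ℕ => substEntry p.1.1.1 p.1.1.2 p.1.2 p.2 := by
  set X := ((ℕ × List (List ℕ)) × ℕ) × ℕ
  have hcu : Primrec fun p : X => p.1.1.1 := Primrec.fst.comp (Primrec.fst.comp Primrec.fst)
  have hL : Primrec fun p : X => p.1.1.2 := Primrec.snd.comp (Primrec.fst.comp Primrec.fst)
  have hn : Primrec fun p : X => p.1.2 := Primrec.snd.comp Primrec.fst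
  have hj : Primrec fun p : X => p.2 := Primrec.snd
  have hu1 : Primrec fun p : X => p.1.2.unpair.1 := Primrec.fst.comp (Primrec.unpair.comp hn)
  have hu2 : Primrec fun p : X => p.1.2.unpair.2 := Primrec.snd.comp (Primrec.unpair.comp hn)
  have hx : Primrec fun p : X => p.1.2.unpair.2.unpair.1 :=
    Primrec.fst.comp (Primrec.unpair.comp hu2)
  have hy : Primrec fun p : X => p.1.2.unpair.2.unpair.2 :=
    Primrec.snd.comp (Primrec.unpair.comp hu2)
  have hget : ∀ (idx : X → ℕ), Primrec idx →
      Primrec fun p : X => (p.1.1.2).getD (idx p) ([] : List ℕ) :=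
    fun idx hidx => (Primrec.list_getD ([] : List ℕ)).comp hL hidx
  have hiter : Primrec fun p : X => nliftIter p.2 (nnorm p.1.1.1) :=
    primrec_nliftIter.comp hj (primrec_nnorm.comp hcu)
  unfold substEntry
  apply Primrec.ite (PrimrecRel.comp Primrec.eq hu1 (Primrec.const 0))
  · apply Primrec.ite (PrimrecRel.comp Primrec.eq hu2 hj)
    · exact hiter
    apply Primrec.ite (PrimrecRel.comp Primrec.nat_lt hj hu2)
    · exact Primrec₂.natPair.comp (Primrec.const 0)
        (Primrec.nat_sub.comp hu2 (Primrec.const 1))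
    · exact Primrec₂.natPair.comp (Primrec.const 0) hu2
  apply Primrec.ite (PrimrecRel.comp Primrec.eq hu1 (Primrec.const 1))
  · exact Primrec₂.natPair.comp (Primrec.const 1)
      (Primrec₂.natPair.comp
        (primrec_tabGet.comp ((Primrec.pair (hget _ hx) hx).pair hj))
        (primrec_tabGet.comp ((Primrec.pair (hget _ hy) hy).pair hj)))
  apply Primrec.ite (PrimrecRel.comp Primrec.eq hu1 (Primrec.const 2))
  · exact Primrec₂.natPair.comp (Primrec.const 2)
      (primrec_tabGet.comp ((Primrec.pair (hget _ hu2) hu2).pair (Primrec.succ.comp hj)))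
  apply Primrec.ite (PrimrecRel.comp Primrec.eq (Primrec.const 0) hj)
  · exact hiter
  · exact Primrec.const (Nat.pair 0 0)

theorem primrec_substG : Primrec₂ substG := by
  have hlen : Primrec fun q : ℕ × List (List ℕ) => q.2.length :=
    Primrec.list_length.comp Primrec.snd
  apply Primrec.list_map
    (Primrec.list_range.comp (Primrec.succ.comp (Primrec.succ.comp hlen)))
  exact (primrec_substEntry.comp
    ((((Primrec.fst.comp Primrec.fst).pair (Primrec.snd.comp Primrec.fst)).pair
      (hlen.comp Primrec.fst)).pair Primrec.snd)).to₂

theorem primrec_substTab : Primrec₂ substTab := by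
  apply Primrec.nat_strong_rec _ (g := fun (cu : ℕ) (L : List (List ℕ)) =>
    some (substG cu L)) ((Primrec.option_some.comp primrec_substG).to₂)
  intro cu n
  rw [substG_spec]

def nsub (cu ct : ℕ) : ℕ := (substTab cu ct).getD 0 0

theorem nsub_spec (u t : Lam) : nsub (code u) (code t) = code (subst t 0 u) := by
  rw [nsub, substTab, range_map_getD 0 (by omega)]
  simp [ldecode_code]

theorem primrec_nsub : Primrec₂ nsub :=
  ((Primrec.list_getD 0).comp primrec_substTab (Primrec.const 0)).to₂

/-! ### The code-level Gross–Knuth step -/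

def CD (n : ℕ) : ℕ := code (cd (ldecode n))

def cdEntry (L : List ℕ) (n : ℕ) : ℕ :=
  if n.unpair.1 = 0 then Nat.pair 0 n.unpair.2
  else if n.unpair.1 = 1 then
    (if n.unpair.2.unpair.1.unpair.1 = 2 then
      nsub (L.getD n.unpair.2.unpair.2 0) (L.getD n.unpair.2.unpair.1.unpair.2 0)
    else Nat.pair 1 (Nat.pair (L.getD n.unpair.2.unpair.1 0) (L.getD n.unpair.2.unpair.2 0)))
  else if n.unpair.1 = 2 then Nat.pair 2 (L.getD n.unpair.2 0)
  else Nat.pair 0 0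

def cdG (L : List ℕ) : ℕ := cdEntry L L.length

theorem cdG_spec (n : ℕ) : cdG ((List.range n).map CD) = CD n := by
  have hlen : ((List.range n).map CD).length = n := by simp
  rw [cdG, hlen]
  rcases h : n.unpair with ⟨t, m⟩
  have hpn : Nat.pair t m = n := by
    have := Nat.pair_unpair n
    rw [h] at this
    exact this
  have hu1 : n.unpair.1 = t := by rw [h]
  have hu2 : n.unpair.2 = m := by rw [h]
  match t with
  | 0 =>
      have hdec : ldecode n = var m := by rw [← hpn]; exact ldecode_pair0 m
      rw [CD, hdec]
      simp only [cdEntry, hu1, hu2]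
      norm_num [cd, code]
  | 1 =>
      have hm : m < n := hpn ▸ lt_pair1 m
      have h1 : m.unpair.1 < n := lt_of_le_of_lt (Nat.unpair_left_le m) hm
      have h2 : m.unpair.2 < n := lt_of_le_of_lt (Nat.unpair_right_le m) hm
      have hdec : ldecode n = app (ldecode m.unpair.1) (ldecode m.unpair.2) := by
        rw [← hpn]; exact ldecode_pair1 m
      rw [CD, hdec]
      simp only [cdEntry, hu1, hu2]
      rw [if_pos trivial, if_neg (show ¬ (1:ℕ) = 0 by omega)]
      set x := m.unpair.1 with hxdef
      set y := m.unpair.2 with hydef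
      obtain ⟨s, mx, hx⟩ : ∃ s mx, x.unpair = (s, mx) := ⟨_, _, rfl⟩
      have hpx : Nat.pair s mx = x := by
        have := Nat.pair_unpair x
        rw [hx] at this
        exact this
      have hxu1 : x.unpair.1 = s := by rw [hx]
      have hxu2 : x.unpair.2 = mx := by rw [hx]
      rw [range_map_getD 0 h2]
      match s, hxu1, hpx with
      | 0, hxu1, hpx =>
          have hdx : ldecode x = var mx := by rw [← hpx]; exact ldecode_pair0 mx
          rw [if_neg (show ¬ x.unpair.1 = 2 by omega)]
          rw [range_map_getD 0 h1, hdx]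
          simp [cd, code, CD, hdx]
      | 1, hxu1, hpx =>
          have hdx : ldecode x = app (ldecode mx.unpair.1) (ldecode mx.unpair.2) := by
            rw [← hpx]; exact ldecode_pair1 mx
          rw [if_neg (show ¬ x.unpair.1 = 2 by omega)]
          rw [range_map_getD 0 h1, hdx]
          simp [cd, code, CD, hdx]
      | 2, hxu1, hpx =>
          have hmx : mx < x := hpx ▸ lt_pair2 mx
          have hmxn : mx < n := lt_of_lt_of_le hmx (le_trans (Nat.unpair_left_le m) hm.le)
          have hdx : ldecode x = abs (ldecode mx) := by rw [← hpx]; exact ldecode_pair2 mx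
          rw [if_pos (show x.unpair.1 = 2 by omega)]
          rw [hxu2, range_map_getD 0 hmxn, hdx]
          rw [show CD y = code (cd (ldecode y)) from rfl,
            show CD mx = code (cd (ldecode mx)) from rfl,
            nsub_spec (cd (ldecode y)) (cd (ldecode mx))]
          simp [cd]
      | k + 3, hxu1, hpx =>
          have hdx : ldecode x = var 0 := by rw [← hpx]; exact ldecode_pair3 k mx
          rw [if_neg (show ¬ x.unpair.1 = 2 by omega)]
          rw [range_map_getD 0 h1, hdx]
          simp [cd, code, CD, hdx]
  | 2 =>
      have hm : m < n := hpn ▸ lt_pair2 m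
      have hdec : ldecode n = abs (ldecode m) := by rw [← hpn]; exact ldecode_pair2 m
      rw [CD, hdec]
      simp only [cdEntry, hu1, hu2]
      rw [if_neg (by omega : ¬ ((2:ℕ) = 0)), if_neg (by omega : ¬ ((2:ℕ) = 1)),
        if_pos trivial, range_map_getD 0 hm]
      simp [cd, code, CD]
  | k + 3 =>
      have hdec : ldecode n = var 0 := by rw [← hpn]; exact ldecode_pair3 k m
      rw [CD, hdec]
      simp only [cdEntry, hu1, hu2]
      rw [if_neg (by omega : ¬ (k + 3 = 0)), if_neg (by omega : ¬ (k + 3 = 1)),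
        if_neg (by omega : ¬ (k + 3 = 2))]
      simp [cd, code]

theorem primrec_cdEntry : Primrec fun p : List ℕ × ℕ => cdEntry p.1 p.2 := by
  set X := List ℕ × ℕ
  have hL : Primrec fun p : X => p.1 := Primrec.fst
  have hn : Primrec fun p : X => p.2 := Primrec.snd
  have hu1 : Primrec fun p : X => p.2.unpair.1 := Primrec.fst.comp (Primrec.unpair.comp hn)
  have hu2 : Primrec fun p : X => p.2.unpair.2 := Primrec.snd.comp (Primrec.unpair.comp hn)
  have hx : Primrec fun p : X => p.2.unpair.2.unpair.1 :=
    Primrec.fst.comp (Primrec.unpair.comp hu2)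
  have hy : Primrec fun p : X => p.2.unpair.2.unpair.2 :=
    Primrec.snd.comp (Primrec.unpair.comp hu2)
  have hxx : Primrec fun p : X => p.2.unpair.2.unpair.1.unpair.1 :=
    Primrec.fst.comp (Primrec.unpair.comp hx)
  have hxy : Primrec fun p : X => p.2.unpair.2.unpair.1.unpair.2 :=
    Primrec.snd.comp (Primrec.unpair.comp hx)
  have hget : ∀ (idx : X → ℕ), Primrec idx →
      Primrec fun p : X => p.1.getD (idx p) 0 :=
    fun idx hidx => (Primrec.list_getD 0).comp hL hidx
  unfold cdEntry
  apply Primrec.ite (PrimrecRel.comp Primrec.eq hu1 (Primrec.const 0))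
  · exact Primrec₂.natPair.comp (Primrec.const 0) hu2
  apply Primrec.ite (PrimrecRel.comp Primrec.eq hu1 (Primrec.const 1))
  · apply Primrec.ite (PrimrecRel.comp Primrec.eq hxx (Primrec.const 2))
    · exact primrec_nsub.comp (hget _ hy) (hget _ hxy)
    · exact Primrec₂.natPair.comp (Primrec.const 1)
        (Primrec₂.natPair.comp (hget _ hx) (hget _ hy))
  apply Primrec.ite (PrimrecRel.comp Primrec.eq hu1 (Primrec.const 2))
  · exact Primrec₂.natPair.comp (Primrec.const 2) (hget _ hu2)
  · exact Primrec.const (Nat.pair 0 0)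

theorem primrec_CD : Primrec CD := by
  have key : Primrec₂ fun (_ : Unit) (n : ℕ) => CD n := by
    have hcdG : Primrec cdG := primrec_cdEntry.comp (Primrec.id.pair Primrec.list_length)
    apply Primrec.nat_strong_rec _ (g := fun (_ : Unit) (L : List ℕ) => some (cdG L))
      ((Primrec.option_some.comp (hcdG.comp Primrec.snd)).to₂)
    intro _ n
    rw [cdG_spec]
  exact key.comp (Primrec.const ()) Primrec.id

theorem code_cd_iterate (F : Lam) (k : ℕ) : code (cd^[k] F) = CD^[k] (code F) := by
  induction k with
  | zero => rfl
  | succ k ih =>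
      rw [Function.iterate_succ_apply', Function.iterate_succ_apply', ← ih, CD, ldecode_code]

theorem computable_code_cd_iterate (F : Lam) : Computable fun k => code (cd^[k] F) := by
  have h : Primrec fun k : ℕ => CD^[k] (code F) :=
    Primrec.nat_iterate Primrec.id (Primrec.const (code F))
      ((primrec_CD.comp Primrec.snd).to₂)
  exact (h.of_eq fun k => (code_cd_iterate F k).symm).to_comp

end Lam


open Lam in
/-- every term `F` has a cofinal recursive reduction sequence:
`F₀ = F`, `F_k ▷* F_{k+1}`, every reduct of `F` further reduces to some `F_k`, and
`k ↦ #(F_k)` is computable (w.r.t. the fixed effective Gödel numbering `code`). -/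
theorem cofinal_recursive_sequence (F : Lam) :
    ∃ Fs : ℕ → Lam,
      Fs 0 = F ∧
      (∀ k, Steps (Fs k) (Fs (k + 1))) ∧
      (∀ G, Steps F G → ∃ k, Steps G (Fs k)) ∧
      Computable (fun k => code (Fs k)) := by
  refine ⟨fun k => cd^[k] F, rfl, fun k => ?_, fun G h => cofinal_cd h,
    computable_code_cd_iterate F⟩
  show Steps (cd^[k] F) (cd^[k + 1] F)
  rw [Function.iterate_succ_apply']
  exact Par.steps_cd _
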